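/- Let G be a simple graph on a finite vertex set of n vertices and let α(G) denote the maximum cardinality of an independent set of G. Then the number of maximal independent sets of G is at most 2^(n − α(G)). -/

import Mathlib

/-- The number of maximal independent sets of an `n`-vertex graph `G` is at most
`2 ^ (n - α(G))`, where `α(G)` is the independence number of `G`. -/
theorem stmt2 {V : Type*} [Fintype V] (G : SimpleGraph V) (α : ℕ)
    (hα : IsGreatest {m : ℕ |
      ∃ s : Finset V, (∀ u ∈ s, ∀ v ∈ s, ¬ G.Adj u v) ∧ s.card = m} α) :
    ({s : Finset V | (∀ u ∈ s, ∀ v ∈ s, ¬ G.Adj u v) ∧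
        ∀ t : Finset V, (∀ u ∈ t, ∀ v ∈ t, ¬ G.Adj u v) → s ⊆ t → t = s}.ncard)
      ≤ 2 ^ (Fintype.card V - α) := by
  classical
  obtain ⟨⟨A, hAind, hAcard⟩, _⟩ := hα
  set M : Set (Finset V) := {s : Finset V | (∀ u ∈ s, ∀ v ∈ s, ¬ G.Adj u v) ∧
        ∀ t : Finset V, (∀ u ∈ t, ∀ v ∈ t, ¬ G.Adj u v) → s ⊆ t → t = s} with hM
  have key : ∀ S ∈ M, ∀ a ∈ A, (a ∈ S ↔ ∀ b ∈ S \ A, ¬ G.Adj a b) := by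
    rintro S ⟨hSind, hSmax⟩ a ha
    constructor
    · intro haS b hb
      exact hSind a haS b (Finset.mem_sdiff.mp hb).1
    · intro hfree
      have hnot : ∀ v ∈ S, ¬ G.Adj a v := by
        intro v hv
        by_cases hvA : v ∈ A
        · exact hAind a ha v hvA
        · exact hfree v (Finset.mem_sdiff.mpr ⟨hv, hvA⟩)
      have hins : ∀ u ∈ insert a S, ∀ v ∈ insert a S, ¬ G.Adj u v := by
        intro u hu v hv
        rcases Finset.mem_insert.mp hu with hua | huS <;>
          rcases Finset.mem_insert.mp hv with hva | hvS
        · subst hua; subst hva; exact G.loopless.irrefl _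
        · subst hua; exact hnot v hvS
        · subst hva; intro h; exact hnot u huS h.symm
        · exact hSind u huS v hvS
      have := hSmax (insert a S) hins (Finset.subset_insert a S)
      rw [← this]; exact Finset.mem_insert_self a S
  have hinj : Set.InjOn (fun S => S \ A) M := by
    intro S hS T hT h
    simp only at h
    ext x
    by_cases hx : x ∈ A
    · rw [key S hS x hx, key T hT x hx, h]
    · constructor <;> intro hxS
      · have : x ∈ S \ A := Finset.mem_sdiff.mpr ⟨hxS, hx⟩
        rw [h] at this; exact (Finset.mem_sdiff.mp this).1
      · have : x ∈ T \ A := Finset.mem_sdiff.mpr ⟨hxS, hx⟩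
        rw [← h] at this; exact (Finset.mem_sdiff.mp this).1
  calc M.ncard = ((fun S => S \ A) '' M).ncard := (Set.ncard_image_of_injOn hinj).symm
    _ ≤ (↑((Finset.univ \ A).powerset) : Set (Finset V)).ncard := by
        apply Set.ncard_le_ncard
        · rintro _ ⟨S, _, rfl⟩
          simp only [Finset.coe_powerset, Set.mem_preimage, Set.mem_powerset_iff,
            Finset.coe_sdiff, Finset.coe_univ]
          intro x hx
          simp only [Finset.coe_sdiff, Set.mem_diff] at hx ⊢
          exact ⟨trivial, hx.2⟩
        · exact (Finset.univ \ A).powerset.finite_toSet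
    _ = 2 ^ (Fintype.card V - α) := by
        rw [Set.ncard_coe_finset, Finset.card_powerset,
          Finset.card_sdiff_of_subset (Finset.subset_univ A), Finset.card_univ, hAcard]
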